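/- (Lemma 2, laxity-order persistence) Suppose the sLLF algorithm run on instance I produces a negative laxity at some time, and let t_- be the earliest time at which some EV has negative laxity. Define F = {i ∈ V : a_i ≤ t_- and ℓ_i(t_-) < 0} and S₂ = {i ∈ V : a_i ≤ t_-, ℓ_i(t_-) ≥ 0, and d_i > t_-}, where all laxities are those produced by the sLLF run. Then for every i ∈ S₂ and every j ∈ F, ℓ_i(t) > ℓ_j(t) for all times t with max(a_i, a_j) ≤ t ≤ t_-. -/
import Mathlib


/-- `clamp x lo hi` is the projection of `x` onto the interval `[lo, hi]`. -/
noncomputable def clamp (x lo hi : ℝ) : ℝ := min (max x lo) hi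

/-- Remaining energy demand at time `t`: `e_i(t) = e_i − Σ_{τ<t} r_i(τ)`. -/
noncomputable def erem (e : ℝ) (r : ℕ → ℝ) (t : ℕ) : ℝ :=
  e - ∑ τ ∈ Finset.range t, r τ

/-- Laxity `ℓ_i(t) = max(d_i − t, 0) − e_i(t)/r̄_i`. -/
noncomputable def laxity (d : ℕ) (e rbar : ℝ) (r : ℕ → ℝ) (t : ℕ) : ℝ :=
  max ((d : ℝ) - (t : ℝ)) 0 - erem e r t / rbar

/-- The rates `r` (with thresholds `L`) are generated by the sLLF algorithm on the EVs in `V`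
with power limit `Q`. -/
def sLLFOn {n : ℕ} (V : Finset (Fin n)) (a d : Fin n → ℕ) (e rbar : Fin n → ℝ)
    (Q : ℕ → ℝ) (L : ℕ → ℝ) (r : Fin n → ℕ → ℝ) : Prop :=
  (∀ i ∈ V, ∀ t, a i ≤ t → t < d i →
    r i t = clamp (rbar i * (L t - laxity (d i) (e i) (rbar i) (r i) t + 1)) 0
      (min (rbar i) (erem (e i) (r i) t))) ∧
  (∀ i ∈ V, ∀ t, ¬(a i ≤ t ∧ t < d i) → r i t = 0) ∧
  (∀ i ∉ V, ∀ t, r i t = 0) ∧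
  (∀ t, ∑ i ∈ V.filter (fun i => a i ≤ t ∧ t < d i), r i t
      = min (Q t) (∑ i ∈ V.filter (fun i => a i ≤ t ∧ t < d i),
          min (rbar i) (erem (e i) (r i) t)))

lemma erem_succ (e : ℝ) (r : ℕ → ℝ) (t : ℕ) :
    erem e r (t + 1) = erem e r t - r t := by
  unfold erem
  rw [Finset.sum_range_succ]
  ring

/-- Normalized form of the sLLF rate: `r t = rbar * min (max (L t − ℓ(t) + 1) 0) (min 1 (e(t)/rbar))`. -/
lemma clamp_factor (c x E : ℝ) (hc : 0 < c) :
    clamp (c * x) 0 (min c E) = c * min (max x 0) (min 1 (E / c)) := by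
  unfold clamp
  rw [mul_min_of_nonneg _ _ hc.le, mul_max_of_nonneg _ _ hc.le, mul_zero,
    mul_min_of_nonneg _ _ hc.le, mul_one, mul_div_cancel₀ _ hc.ne']

/-- Per-EV bounds produced by the sLLF rule: demands stay nonnegative and rates are
between `0` and the remaining demand. -/
lemma sLLF_bounds (a d : ℕ) (e rbar : ℝ) (r : ℕ → ℝ) (L : ℕ → ℝ)
    (he : 0 ≤ e) (hrb : 0 < rbar)
    (hact : ∀ t, a ≤ t → t < d →
      r t = clamp (rbar * (L t - laxity d e rbar r t + 1)) 0 (min rbar (erem e r t)))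
    (hinact : ∀ t, ¬(a ≤ t ∧ t < d) → r t = 0) :
    ∀ t, 0 ≤ erem e r t ∧ 0 ≤ r t ∧ r t ≤ erem e r t := by
  have step : ∀ t, 0 ≤ erem e r t → 0 ≤ r t ∧ r t ≤ erem e r t := by
    intro t h
    by_cases hA : a ≤ t ∧ t < d
    · rw [hact t hA.1 hA.2]
      unfold clamp
      constructor
      · exact le_min (le_max_right _ _) (le_min hrb.le h)
      · exact le_trans (min_le_right _ _) (min_le_right _ _)
    · rw [hinact t hA]; exact ⟨le_refl 0, h⟩
  intro t
  induction t with
  | zero =>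
    have h0 : 0 ≤ erem e r 0 := by simpa [erem] using he
    exact ⟨h0, step 0 h0⟩
  | succ k ih =>
    have h1 : 0 ≤ erem e r (k + 1) := by
      rw [erem_succ]; linarith [ih.2.2]
    exact ⟨h1, step (k + 1) h1⟩

lemma erem_antitone (e : ℝ) (r : ℕ → ℝ) (hr : ∀ τ, 0 ≤ r τ) {s t : ℕ} (h : s ≤ t) :
    erem e r t ≤ erem e r s := by
  unfold erem
  have := Finset.sum_le_sum_of_subset_of_nonneg
    (Finset.range_subset_range.mpr h) (fun τ _ _ => hr τ)
  linarith

lemma laxity_succ (d : ℕ) (e rbar : ℝ) (r : ℕ → ℝ) (t : ℕ) (ht : t < d) :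
    laxity d e rbar r (t + 1) = laxity d e rbar r t - 1 + r t / rbar := by
  unfold laxity
  have h1 : ((t : ℝ) + 1) ≤ (d : ℝ) := by exact_mod_cast Nat.succ_le_of_lt ht
  have h2 : max ((d : ℝ) - (t : ℝ)) 0 = (d : ℝ) - (t : ℝ) := max_eq_left (by linarith)
  have h3 : max ((d : ℝ) - ((t + 1 : ℕ) : ℝ)) 0 = (d : ℝ) - ((t + 1 : ℕ) : ℝ) :=
    max_eq_left (by push_cast; linarith)
  rw [h2, h3, erem_succ]
  push_cast
  ring

/-- Lemma 2, laxity-order persistence: if the sLLF run first produces a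
negative laxity at time `t_-`, then every EV of `S₂` (nonnegative laxity at `t_-`, departing
after `t_-`) has laxity strictly greater than that of every EV of `F` (negative laxity at
`t_-`) at all times `t` with `max(a_i, a_j) ≤ t ≤ t_-`. -/
theorem stmt_9 {n : ℕ} (T : ℕ) (a d : Fin n → ℕ) (e rbar : Fin n → ℝ) (P : ℕ → ℝ)
    (had : ∀ i, a i < d i) (hdT : ∀ i, d i ≤ T)
    (he : ∀ i, 0 < e i) (hrbar : ∀ i, 0 < rbar i) (hP : ∀ t, 0 ≤ P t)
    (L : ℕ → ℝ) (r : Fin n → ℕ → ℝ)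
    (hrun : sLLFOn Finset.univ a d e rbar P L r)
    (tm : ℕ)
    (hneg : ∃ i, a i ≤ tm ∧ laxity (d i) (e i) (rbar i) (r i) tm < 0)
    (hearliest : ∀ t < tm, ∀ i, a i ≤ t → 0 ≤ laxity (d i) (e i) (rbar i) (r i) t) :
    ∀ i j : Fin n,
      (a i ≤ tm ∧ 0 ≤ laxity (d i) (e i) (rbar i) (r i) tm ∧ tm < d i) →
      (a j ≤ tm ∧ laxity (d j) (e j) (rbar j) (r j) tm < 0) →
      ∀ t : ℕ, max (a i) (a j) ≤ t → t ≤ tm →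
        laxity (d j) (e j) (rbar j) (r j) t < laxity (d i) (e i) (rbar i) (r i) t := by
  obtain ⟨hact, hinact, -, -⟩ := hrun
  intro i j hi hj
  obtain ⟨hai, hli, hdi⟩ := hi
  obtain ⟨haj, hlj⟩ := hj
  have hacti := hact i (Finset.mem_univ i)
  have hactj := hact j (Finset.mem_univ j)
  have hbi := sLLF_bounds (a i) (d i) (e i) (rbar i) (r i) L (he i).le (hrbar i)
    (fun t => hacti t) (fun t => hinact i (Finset.mem_univ i) t)
  have hbj := sLLF_bounds (a j) (d j) (e j) (rbar j) (r j) L (he j).le (hrbar j)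
    (fun t => hactj t) (fun t => hinact j (Finset.mem_univ j) t)
  have hrj_nonneg : ∀ τ, 0 ≤ r j τ := fun τ => (hbj τ).2.1
  -- the remaining demand of `j` at `tm` is positive
  have heremj_pos : 0 < erem (e j) (r j) tm := by
    unfold laxity at hlj
    have hmax : 0 ≤ max ((d j : ℝ) - (tm : ℝ)) 0 := le_max_right _ _
    have hdiv : 0 < erem (e j) (r j) tm / rbar j := by linarith
    by_contra h
    push_neg at h
    have : erem (e j) (r j) tm / rbar j ≤ 0 := div_nonpos_of_nonpos_of_nonneg h (hrbar j).le
    linarith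
  -- `j` departs no earlier than `tm`
  have htmdj : tm ≤ d j := by
    by_contra h
    push_neg at h
    have h1 : 0 ≤ laxity (d j) (e j) (rbar j) (r j) (d j) :=
      hearliest (d j) h j (had j).le
    unfold laxity at h1
    have h2 : max ((d j : ℝ) - (d j : ℝ)) 0 = 0 := by simp
    rw [h2] at h1
    have h3 : erem (e j) (r j) (d j) ≤ 0 := by
      by_contra h4
      push_neg at h4
      have : 0 < erem (e j) (r j) (d j) / rbar j := div_pos h4 (hrbar j)
      linarith
    have := erem_antitone (e j) (r j) hrj_nonneg h.le
    linarith
  -- main downward induction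
  have main : ∀ m t, tm = t + m → max (a i) (a j) ≤ t →
      laxity (d j) (e j) (rbar j) (r j) t < laxity (d i) (e i) (rbar i) (r i) t := by
    intro m
    induction m with
    | zero =>
      intro t ht _
      have : t = tm := by omega
      subst this
      linarith
    | succ k ih =>
      intro t ht hmax
      have hIH := ih (t + 1) (by omega) (le_trans hmax (Nat.le_succ t))
      by_contra hcon
      push_neg at hcon
      have hait : a i ≤ t := le_trans (le_max_left _ _) hmax
      have hajt : a j ≤ t := le_trans (le_max_right _ _) hmax
      have httm : t < tm := by omega
      have hti : t < d i := lt_trans httm hdi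
      have htj : t < d j := lt_of_lt_of_le httm htmdj
      set ℓi := laxity (d i) (e i) (rbar i) (r i) t with hℓi
      set ℓj := laxity (d j) (e j) (rbar j) (r j) t with hℓj
      set Bi := erem (e i) (r i) t / rbar i with hBi
      set Bj := erem (e j) (r j) t / rbar j with hBj
      set ρi := min (max (L t - ℓi + 1) 0) (min 1 Bi) with hρi
      set ρj := min (max (L t - ℓj + 1) 0) (min 1 Bj) with hρj
      have hri : r i t = rbar i * ρi := by
        rw [hacti t hait hti, clamp_factor _ _ _ (hrbar i)]
      have hrjt : r j t = rbar j * ρj := by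
        rw [hactj t hajt htj, clamp_factor _ _ _ (hrbar j)]
      have hreci : laxity (d i) (e i) (rbar i) (r i) (t + 1) = ℓi - 1 + ρi := by
        rw [laxity_succ _ _ _ _ t hti, hri, mul_div_cancel_left₀ _ (hrbar i).ne']
      have hrecj : laxity (d j) (e j) (rbar j) (r j) (t + 1) = ℓj - 1 + ρj := by
        rw [laxity_succ _ _ _ _ t htj, hrjt, mul_div_cancel_left₀ _ (hrbar j).ne']
      rw [hreci, hrecj] at hIH
      -- hIH : ℓj - 1 + ρj < ℓi - 1 + ρi ; hcon : ℓi ≤ ℓj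
      have hρi_le1 : ρi ≤ 1 := le_trans (min_le_right _ _) (min_le_left _ _)
      have hρi_le_max : ρi ≤ max (L t - ℓi + 1) 0 := min_le_left _ _
      rcases le_or_gt (max (L t - ℓj + 1) 0) (min 1 Bj) with hc | hc
      · -- ρj realizes the max term
        have hρjeq : ρj = max (L t - ℓj + 1) 0 := min_eq_left hc
        rcases le_total (L t - ℓi + 1) 0 with h2 | h2
        · have hmi : max (L t - ℓi + 1) 0 = 0 := max_eq_right h2
          have hρj0 : 0 ≤ ρj := hρjeq ▸ le_max_right _ _
          rw [hmi] at hρi_le_max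
          linarith
        · have hmi : max (L t - ℓi + 1) 0 = L t - ℓi + 1 := max_eq_left h2
          have hρjge : L t - ℓj + 1 ≤ ρj := hρjeq ▸ le_max_left _ _
          rw [hmi] at hρi_le_max
          linarith
      · have hρjeq : ρj = min 1 Bj := min_eq_right hc.le
        rcases le_or_gt 1 Bj with hc2 | hc2
        · have hρj1 : ρj = 1 := by rw [hρjeq, min_eq_left hc2]
          linarith
        · have hρjB : ρj = Bj := by rw [hρjeq, min_eq_right hc2.le]
          have hrjE : r j t = erem (e j) (r j) t := by
            rw [hrjt, hρjB, hBj, mul_div_cancel₀ _ (hrbar j).ne']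
          have hz : erem (e j) (r j) (t + 1) = 0 := by
            rw [erem_succ, hrjE]; ring
          have hle : erem (e j) (r j) tm ≤ erem (e j) (r j) (t + 1) :=
            erem_antitone (e j) (r j) hrj_nonneg (by omega)
          rw [hz] at hle
          linarith
  intro t hmax htm
  exact main (tm - t) t (by omega) hmax
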